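/- arXiv:2312.13389 — 5 statements merged into one kernel-verified Lean document; each statement's English description precedes it below -/
import Mathlib

section
/- For integers n ≥ 1, b ≥ m ≥ 1, the probability that a fixed element appears in the final subsample of MUSTwo equals that of sampling with replacement: ∑_{j=1}^{b} C(b,j) (1/n)^j (1 − 1/n)^{b−j} · (1 − C(b−j, m)/C(b, m)) = 1 − (1 − 1/n)^m, where C(b−j, m) is taken to be 0 when b − j < m. -/
open Finset

lemma must_aux (b m j : ℕ) (hmb : m ≤ b) :
    b.choose j * (b - j).choose m = b.choose m * (b - m).choose j := by
  rcases le_or_gt j (b - m) with h | h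
  · have hjb : j ≤ b := h.trans (Nat.sub_le _ _)
    have hms : m ≤ b - j := by omega
    have := Nat.choose_mul (n := b) (k := b - j) (s := m) hms
    rw [Nat.choose_symm hjb] at this
    rw [this, show b - j - m = b - m - j from by omega, Nat.choose_symm h]
  · have h1 : (b - m).choose j = 0 := Nat.choose_eq_zero_of_lt h
    rcases le_or_gt j b with h2 | h2
    · have : (b - j).choose m = 0 := Nat.choose_eq_zero_of_lt (by omega)
      simp [this, h1]
    · simp [Nat.choose_eq_zero_of_lt h2, h1]

theorem must_wo_eta (n b m : ℕ) (hn : 1 ≤ n) (hm : 1 ≤ m) (hmb : m ≤ b) :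
    ∑ j ∈ Finset.Icc 1 b,
      (b.choose j : ℝ) * (1 / n) ^ j * (1 - 1 / n) ^ (b - j) *
        (1 - ((b - j).choose m : ℝ) / (b.choose m : ℝ))
      = 1 - (1 - 1 / (n : ℝ)) ^ m := by
  set p : ℝ := 1 / n with hp
  set q : ℝ := 1 - p with hq
  have hpq : p + q = 1 := by rw [hq]; ring
  have hCbm : (0:ℝ) < (b.choose m : ℝ) := by exact_mod_cast Nat.choose_pos hmb
  have hkey : ∀ j, (b.choose j : ℝ) * p ^ j * q ^ (b - j) *
      (1 - ((b - j).choose m : ℝ) / (b.choose m : ℝ))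
      = (b.choose j : ℝ) * p ^ j * q ^ (b - j)
        - ((b - m).choose j : ℝ) * p ^ j * q ^ (b - j) := by
    intro j
    have h := must_aux b m j hmb
    have h' : ((b.choose j : ℝ)) * ((b - j).choose m : ℝ) / (b.choose m : ℝ)
        = ((b - m).choose j : ℝ) := by
      rw [div_eq_iff hCbm.ne']
      exact_mod_cast (h.trans (Nat.mul_comm _ _))
    have h2 : (b.choose j : ℝ) * p ^ j * q ^ (b - j) *
        (((b - j).choose m : ℝ) / (b.choose m : ℝ))
        = ((b - m).choose j : ℝ) * p ^ j * q ^ (b - j) := by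
      rw [← h']; ring
    linear_combination -h2
  rw [Finset.sum_congr rfl (fun j _ => hkey j), Finset.sum_sub_distrib]
  have herase : Finset.Icc 1 b = (Finset.range (b+1)).erase 0 := by
    ext x; simp [Nat.lt_succ_iff]; omega
  have hbin : ∀ (N : ℕ), ∑ j ∈ Finset.range (N + 1),
      (N.choose j : ℝ) * p ^ j * q ^ (N - j) = 1 := by
    intro N
    have h := add_pow p q N
    rw [hpq, one_pow] at h
    exact (Finset.sum_congr rfl (fun j _ => by ring)).trans h.symm
  have S1 : ∑ j ∈ Finset.Icc 1 b, (b.choose j : ℝ) * p ^ j * q ^ (b - j)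
      = 1 - q ^ b := by
    rw [herase, Finset.sum_erase_eq_sub (by simp), hbin b]
    simp
  have S2 : ∑ j ∈ Finset.Icc 1 b, ((b - m).choose j : ℝ) * p ^ j * q ^ (b - j)
      = q ^ m - q ^ b := by
    rw [herase, Finset.sum_erase_eq_sub (by simp)]
    have hsub : ∑ j ∈ Finset.range (b + 1), ((b - m).choose j : ℝ) * p ^ j * q ^ (b - j)
        = ∑ j ∈ Finset.range (b - m + 1), ((b - m).choose j : ℝ) * p ^ j * q ^ (b - j) := by
      refine (Finset.sum_subset (Finset.range_subset_range.mpr (by omega)) ?_).symm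
      intro x hx hnx
      have hlt : b - m < x := by
        simp only [Finset.mem_range] at hnx; omega
      simp [Nat.choose_eq_zero_of_lt hlt]
    rw [hsub]
    have hstep : ∑ j ∈ Finset.range (b - m + 1), ((b - m).choose j : ℝ) * p ^ j * q ^ (b - j)
        = q ^ m * ∑ j ∈ Finset.range (b - m + 1),
            ((b - m).choose j : ℝ) * p ^ j * q ^ (b - m - j) := by
      rw [Finset.mul_sum]
      refine Finset.sum_congr rfl (fun j hj => ?_)
      have hj' : j ≤ b - m := by simpa [Nat.lt_succ_iff] using hj
      rw [show b - j = m + (b - m - j) from by omega, pow_add]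
      ring
    rw [hstep, hbin (b - m), mul_one]
    simp
  rw [S1, S2]
  ring
end

section
/- For integers n ≥ 1 and m ≥ 1, define f(b) = (b/n)(1 − (1 − 1/b)^m) for real b ∈ [1, n]. Then f is increasing on [1, n]; consequently f(b) ≤ f(n) = 1 − (1 − 1/n)^m for all b ∈ [1, n], with equality only when b = n (or m = 1 trivially). -/
theorem must_ow_eta_monotone (n m : ℕ) (hn : 1 ≤ n) (hm : 1 ≤ m)
    (f : ℝ → ℝ) (hf : ∀ b : ℝ, f b = (b / n) * (1 - (1 - 1 / b) ^ m)) :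
    MonotoneOn f (Set.Icc (1 : ℝ) (n : ℝ)) ∧
      (∀ b ∈ Set.Icc (1 : ℝ) (n : ℝ),
        f b ≤ 1 - (1 - 1 / (n : ℝ)) ^ m ∧
        (f b = 1 - (1 - 1 / (n : ℝ)) ^ m → b = (n : ℝ) ∨ m = 1)) := by
  have hn1 : (1:ℝ) ≤ n := by exact_mod_cast hn
  have hn0 : (0:ℝ) < n := lt_of_lt_of_le one_pos hn1
  have key : ∀ b : ℝ, 1 ≤ b →
      f b = (∑ k ∈ Finset.range m, (1 - 1 / b) ^ k) / n := by
    intro b hb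
    have hb0 : (0:ℝ) < b := lt_of_lt_of_le one_pos hb
    have hgs := geom_sum_mul (1 - 1 / b) m
    rw [hf]
    have h1 : (1 - 1/b) - 1 = -(1/b) := by ring
    rw [h1] at hgs
    have hS : (∑ k ∈ Finset.range m, (1 - 1 / b) ^ k) = b * (1 - (1 - 1/b)^m) := by
      have hb' : b ≠ 0 := hb0.ne'
      field_simp at hgs ⊢
      linarith [hgs]
    rw [hS]; ring
  have fn : f n = 1 - (1 - 1/(n:ℝ))^m := by
    rw [hf, div_self hn0.ne', one_mul]
  have term_le : ∀ a b : ℝ, 1 ≤ a → a ≤ b → ∀ k, (1 - 1/a)^k ≤ (1 - 1/b)^k := by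
    intro a b ha hab k
    have ha0 : (0:ℝ) < a := lt_of_lt_of_le one_pos ha
    have h0 : (0:ℝ) ≤ 1 - 1/a := by
      have : 1/a ≤ 1 := by rw [div_le_one ha0]; exact ha
      linarith
    have h1 : 1 - 1/a ≤ 1 - 1/b := by
      have := one_div_le_one_div_of_le ha0 hab
      linarith
    exact pow_le_pow_left₀ h0 h1 k
  have mono : MonotoneOn f (Set.Icc (1:ℝ) (n:ℝ)) := by
    intro a ha b hb hab
    rw [key a ha.1, key b hb.1]
    exact (div_le_div_iff_of_pos_right hn0).mpr (Finset.sum_le_sum fun k _ => term_le a b ha.1 hab k)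
  refine ⟨mono, fun b hb => ?_⟩
  have hfn : f b ≤ 1 - (1 - 1/(n:ℝ))^m := by
    rw [← fn]
    exact mono hb ⟨hn1, le_refl _⟩ hb.2
  refine ⟨hfn, fun heq => ?_⟩
  by_cases hm1 : m = 1
  · exact Or.inr hm1
  · left
    by_contra hbn
    have hblt : b < (n:ℝ) := lt_of_le_of_ne hb.2 hbn
    have hm2 : 2 ≤ m := by omega
    have hb1 : (1:ℝ) ≤ b := hb.1
    have hb0 : (0:ℝ) < b := lt_of_lt_of_le one_pos hb1
    have hstrict : (∑ k ∈ Finset.range m, (1 - 1 / b) ^ k)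
        < (∑ k ∈ Finset.range m, (1 - 1 / (n:ℝ)) ^ k) := by
      apply Finset.sum_lt_sum (fun k _ => term_le b n hb1 hb.2 k)
      refine ⟨1, Finset.mem_range.mpr (by omega), ?_⟩
      have : 1/(n:ℝ) < 1/b := one_div_lt_one_div_of_lt hb0 hblt
      simp only [pow_one]
      linarith
    have hlt : f b < f n := by
      rw [key b hb1, key (n:ℝ) hn1]
      exact (div_lt_div_iff_of_pos_right hn0).mpr hstrict
    rw [fn] at hlt
    linarith [heq ▸ hlt]
end

section
/- For integers n ≥ 1, 1 ≤ b < n, and m ≥ 2, the following strict chain of inequalities holds: (b/n)(1 − (1 − 1/b)^m) < 1 − (1 − 1/n)^m < m/n. -/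
lemma geom_repr (r : ℝ) (m : ℕ) :
    1 - r ^ m = (1 - r) * ∑ i ∈ Finset.range m, r ^ i := by
  have := geom_sum_mul r m
  nlinarith [this]

theorem eta_chain (n b m : ℕ) (hn : 1 ≤ n) (hb : 1 ≤ b) (hbn : b < n) (hm : 2 ≤ m) :
    ((b : ℝ) / n) * (1 - (1 - 1 / (b : ℝ)) ^ m) < 1 - (1 - 1 / (n : ℝ)) ^ m ∧
      1 - (1 - 1 / (n : ℝ)) ^ m < (m : ℝ) / n := by
  have hbR : (1 : ℝ) ≤ b := by exact_mod_cast hb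
  have hnR : (1 : ℝ) ≤ n := by exact_mod_cast hn
  have hbnR : (b : ℝ) < n := by exact_mod_cast hbn
  have hb0 : (0 : ℝ) < b := by linarith
  have hn0 : (0 : ℝ) < n := by linarith
  set rb : ℝ := 1 - 1 / b with hrb
  set rn : ℝ := 1 - 1 / n with hrn
  have hrb0 : 0 ≤ rb := by
    have : 1 / (b : ℝ) ≤ 1 := by rw [div_le_one hb0]; linarith
    simp only [hrb]; linarith
  have hrbrn : rb < rn := by
    have : 1 / (n : ℝ) < 1 / b := by
      apply one_div_lt_one_div_of_lt hb0 hbnR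
    simp only [hrb, hrn]; linarith
  have hrn1 : rn < 1 := by
    have : 0 < 1 / (n : ℝ) := by positivity
    simp only [hrn]; linarith
  have h1m : 1 ∈ Finset.range m := Finset.mem_range.mpr (by omega)
  constructor
  · rw [geom_repr rb m, geom_repr rn m]
    have hSb : ∑ i ∈ Finset.range m, rb ^ i < ∑ i ∈ Finset.range m, rn ^ i := by
      apply Finset.sum_lt_sum (fun i _ => pow_le_pow_left₀ hrb0 hrbrn.le i)
      exact ⟨1, h1m, by simpa using hrbrn⟩
    have hrbv : 1 - rb = 1 / b := by simp [hrb]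
    have hrnv : 1 - rn = 1 / n := by simp [hrn]
    rw [hrbv, hrnv]
    have hSb0 : 0 ≤ ∑ i ∈ Finset.range m, rb ^ i :=
      Finset.sum_nonneg fun i _ => pow_nonneg hrb0 i
    have e1 : ((b:ℝ)/n) * ((1/b) * ∑ i ∈ Finset.range m, rb ^ i)
        = (1/n) * ∑ i ∈ Finset.range m, rb ^ i := by
      field_simp
    rw [e1]
    exact mul_lt_mul_of_pos_left hSb (by positivity)
  · rw [geom_repr rn m]
    have hrn0 : 0 ≤ rn := by
      have : 1 / (n : ℝ) ≤ 1 := by rw [div_le_one hn0]; linarith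
      simp only [hrn]; linarith
    have hS : ∑ i ∈ Finset.range m, rn ^ i < m := by
      calc ∑ i ∈ Finset.range m, rn ^ i < ∑ i ∈ Finset.range m, 1 := by
            apply Finset.sum_lt_sum (fun i _ => pow_le_one₀ hrn0 hrn1.le)
            exact ⟨1, h1m, by simpa using hrn1⟩
        _ = m := by simp
    have hrnv : 1 - rn = 1 / n := by simp [hrn]
    rw [hrnv, one_div, inv_mul_eq_div, div_lt_div_iff₀ hn0 hn0]
    exact mul_lt_mul_of_pos_right hS hn0
end

section
/- Let θ > 0. The Gaussian privacy profile δ(ε) = Φ(θ/2 − ε/θ) − e^ε Φ(−θ/2 − ε/θ), where Φ is the standard normal CDF, satisfies 0 < δ(ε) < 1 for all ε ≥ 0, and δ(ε) is strictly decreasing in ε. -/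
noncomputable def stdNormalCDF (x : ℝ) : ℝ :=
  ∫ t in Set.Iic x, (Real.sqrt (2 * Real.pi))⁻¹ * Real.exp (-t ^ 2 / 2)


open MeasureTheory Real Set ENNReal

noncomputable def phi (t : ℝ) : ℝ := (Real.sqrt (2 * Real.pi))⁻¹ * Real.exp (-t ^ 2 / 2)

lemma phi_pos (t : ℝ) : 0 < phi t := by
  have h : 0 < Real.sqrt (2 * Real.pi) := Real.sqrt_pos.2 (by positivity)
  exact mul_pos (inv_pos.2 h) (Real.exp_pos _)

lemma phi_cont : Continuous phi := by
  unfold phi; fun_prop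

lemma phi_integrable : Integrable phi := by
  have h : Integrable (fun t : ℝ => Real.exp (-(1/2 : ℝ) * t ^ 2)) :=
    integrable_exp_neg_mul_sq (by norm_num)
  have := h.const_mul ((Real.sqrt (2 * Real.pi))⁻¹)
  convert this using 2 with t
  unfold phi
  ring_nf

lemma phi_integral : ∫ t, phi t = 1 := by
  have h : ∫ t : ℝ, Real.exp (-(1/2 : ℝ) * t ^ 2) = Real.sqrt (π / (1/2)) :=
    integral_gaussian (1/2)
  unfold phi
  rw [MeasureTheory.integral_const_mul]
  have : (fun t : ℝ => Real.exp (-t ^ 2 / 2)) = fun t : ℝ => Real.exp (-(1/2 : ℝ) * t ^ 2) := by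
    funext t; ring_nf
  rw [this, h]
  rw [show π / (1/2 : ℝ) = 2 * π by ring]
  rw [inv_mul_cancel₀ (ne_of_gt (Real.sqrt_pos.2 (by positivity)))]

lemma cdf_eq (x : ℝ) : stdNormalCDF x = ∫ t in Set.Iic x, phi t := rfl

lemma cdf_pos (x : ℝ) : 0 < stdNormalCDF x := by
  rw [cdf_eq]
  rw [setIntegral_pos_iff_support_of_nonneg_ae
    (Filter.Eventually.of_forall fun t => (phi_pos t).le) (phi_integrable.integrableOn)]
  have h1 : Set.Iic x ⊆ Function.support phi ∩ Set.Iic x := by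
    intro t ht; exact ⟨(phi_pos t).ne', ht⟩
  calc (0 : ℝ≥0∞) < volume (Set.Iic x) := by simp
    _ ≤ volume (Function.support phi ∩ Set.Iic x) := measure_mono h1

lemma cdf_le_one (x : ℝ) : stdNormalCDF x ≤ 1 := by
  rw [cdf_eq, ← phi_integral]
  exact setIntegral_le_integral phi_integrable
    (Filter.Eventually.of_forall fun t => (phi_pos t).le)

lemma cdf_hasDeriv (x : ℝ) : HasDerivAt stdNormalCDF (phi x) x := by
  have key : ∀ u : ℝ, stdNormalCDF u = stdNormalCDF 0 + ∫ t in (0:ℝ)..u, phi t := by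
    intro u
    rw [cdf_eq, cdf_eq, ← intervalIntegral.integral_Iic_sub_Iic
      phi_integrable.integrableOn phi_integrable.integrableOn]
    ring
  have h := intervalIntegral.integral_hasDerivAt_right
    (phi_integrable.intervalIntegrable)
    (phi_cont.stronglyMeasurableAtFilter _ _)
    phi_cont.continuousAt (a := 0) (b := x)
  have h2 := h.const_add (stdNormalCDF 0)
  rw [show stdNormalCDF = fun u => stdNormalCDF 0 + ∫ t in (0:ℝ)..u, phi t from funext key]
  exact h2

lemma cdf_shift (b θ : ℝ) :
    stdNormalCDF (b + θ) = ∫ t in Set.Iic b, phi (t + θ) := by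
  rw [cdf_eq, ← MeasureTheory.integral_indicator measurableSet_Iic,
    ← MeasureTheory.integral_indicator measurableSet_Iic]
  rw [← MeasureTheory.integral_add_right_eq_self
    (Set.indicator (Set.Iic (b + θ)) phi) θ]
  congr 1
  funext t
  by_cases ht : t ≤ b <;> simp [Set.indicator, ht]

lemma phi_shift_sub_nonneg {θ ε t b : ℝ} (hθ : 0 < θ) (hb : b = -θ/2 - ε/θ)
    (ht : t ≤ b) : Real.exp ε * phi t ≤ phi (t + θ) := by
  unfold phi
  rw [mul_left_comm]
  have hc : (0:ℝ) < (Real.sqrt (2 * Real.pi))⁻¹ :=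
    inv_pos.2 (Real.sqrt_pos.2 (by positivity))
  apply mul_le_mul_of_nonneg_left _ hc.le
  rw [← Real.exp_add]
  apply Real.exp_le_exp.2
  have htθ : t * θ ≤ b * θ := mul_le_mul_of_nonneg_right ht hθ.le
  have hbθ : b * θ = -θ^2/2 - ε := by
    rw [hb]; field_simp
  nlinarith [htθ, hbθ]

lemma phi_shift_sub_pos {θ ε t b : ℝ} (hθ : 0 < θ) (hb : b = -θ/2 - ε/θ)
    (ht : t < b) : Real.exp ε * phi t < phi (t + θ) := by
  unfold phi
  rw [mul_left_comm]
  have hc : (0:ℝ) < (Real.sqrt (2 * Real.pi))⁻¹ :=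
    inv_pos.2 (Real.sqrt_pos.2 (by positivity))
  apply mul_lt_mul_of_pos_left _ hc
  rw [← Real.exp_add]
  apply Real.exp_lt_exp.2
  have htθ : t * θ < b * θ := mul_lt_mul_of_pos_right ht hθ
  have hbθ : b * θ = -θ^2/2 - ε := by
    rw [hb]; field_simp
  nlinarith [htθ, hbθ]

lemma delta_pos (θ ε : ℝ) (hθ : 0 < θ) :
    0 < stdNormalCDF (θ/2 - ε/θ) - Real.exp ε * stdNormalCDF (-θ/2 - ε/θ) := by
  set b : ℝ := -θ/2 - ε/θ with hb
  have hab : θ/2 - ε/θ = b + θ := by rw [hb]; ring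
  have hint1 : Integrable (fun t : ℝ => phi (t + θ)) := phi_integrable.comp_add_right θ
  have hint2 : Integrable (fun t : ℝ => Real.exp ε * phi t) := phi_integrable.const_mul _
  rw [hab, cdf_shift, cdf_eq, ← MeasureTheory.integral_const_mul,
    ← MeasureTheory.integral_sub hint1.integrableOn hint2.integrableOn]
  rw [setIntegral_pos_iff_support_of_nonneg_ae]
  · have h1 : Set.Iio b ⊆ Function.support (fun t => phi (t + θ) - Real.exp ε * phi t)
        ∩ Set.Iic b := by
      intro t ht
      exact ⟨sub_ne_zero.2 (ne_of_gt (phi_shift_sub_pos hθ hb ht)), Set.mem_Iic.2 (le_of_lt (Set.mem_Iio.1 ht))⟩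
    calc (0 : ℝ≥0∞) < volume (Set.Iio b) := by simp
      _ ≤ _ := measure_mono h1
  · filter_upwards [MeasureTheory.ae_restrict_mem measurableSet_Iic] with t ht
    exact sub_nonneg.2 (phi_shift_sub_nonneg hθ hb ht)
  · exact (hint1.sub hint2).integrableOn

lemma exp_mul_phi (θ ε : ℝ) (hθ : θ ≠ 0) :
    Real.exp ε * phi (-θ/2 - ε/θ) = phi (θ/2 - ε/θ) := by
  unfold phi
  rw [mul_left_comm, ← Real.exp_add]
  congr 2
  field_simp
  ring

lemma delta_hasDeriv (θ : ℝ) (hθ : 0 < θ) (ε : ℝ) :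
    HasDerivAt (fun ε => stdNormalCDF (θ/2 - ε/θ) - Real.exp ε * stdNormalCDF (-θ/2 - ε/θ))
      (-(Real.exp ε * stdNormalCDF (-θ/2 - ε/θ))) ε := by
  have h1 : HasDerivAt (fun ε : ℝ => θ/2 - ε/θ) (-(1/θ)) ε := by
    simpa using ((hasDerivAt_id ε).div_const θ).const_sub (θ/2)
  have h2 : HasDerivAt (fun ε : ℝ => -θ/2 - ε/θ) (-(1/θ)) ε := by
    simpa using ((hasDerivAt_id ε).div_const θ).const_sub (-θ/2)
  have hA : HasDerivAt (fun ε : ℝ => stdNormalCDF (θ/2 - ε/θ))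
      (phi (θ/2 - ε/θ) * (-(1/θ))) ε :=
    (cdf_hasDeriv (θ/2 - ε/θ)).comp (h₂ := stdNormalCDF) ε h1
  have hB : HasDerivAt (fun ε : ℝ => stdNormalCDF (-θ/2 - ε/θ))
      (phi (-θ/2 - ε/θ) * (-(1/θ))) ε :=
    (cdf_hasDeriv (-θ/2 - ε/θ)).comp (h₂ := stdNormalCDF) ε h2
  have hC := (Real.hasDerivAt_exp ε).mul hB
  have := hA.sub hC
  refine this.congr_deriv ?_
  rw [← exp_mul_phi θ ε hθ.ne']
  ring

theorem gaussian_privacy_profile (θ : ℝ) (hθ : 0 < θ)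
    (δ : ℝ → ℝ)
    (hδ : ∀ ε, δ ε = stdNormalCDF (θ / 2 - ε / θ) -
        Real.exp ε * stdNormalCDF (-θ / 2 - ε / θ)) :
    (∀ ε : ℝ, 0 ≤ ε → 0 < δ ε ∧ δ ε < 1) ∧
    StrictAntiOn δ (Set.Ici (0 : ℝ)) := by
  have hfun : δ = fun ε => stdNormalCDF (θ/2 - ε/θ) -
      Real.exp ε * stdNormalCDF (-θ/2 - ε/θ) := funext hδ
  constructor
  · intro ε _
    constructor
    · rw [hδ ε]; exact delta_pos θ ε hθ
    · rw [hδ ε]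
      calc stdNormalCDF (θ/2 - ε/θ) - Real.exp ε * stdNormalCDF (-θ/2 - ε/θ)
          < stdNormalCDF (θ/2 - ε/θ) :=
            sub_lt_self _ (mul_pos (Real.exp_pos ε) (cdf_pos _))
        _ ≤ 1 := cdf_le_one _
  · apply strictAntiOn_of_deriv_neg (convex_Ici 0)
    · rw [hfun]
      exact fun x _ => (delta_hasDeriv θ hθ x).continuousAt.continuousWithinAt
    · intro x _
      rw [hfun, (delta_hasDeriv θ hθ x).deriv]
      exact neg_lt_zero.2 (mul_pos (Real.exp_pos x) (cdf_pos _))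
end

section
/- For integers n ≥ 1, b ≥ 1, 1 ≤ u ≤ m ≤ b: ∑_{j=u}^{b} C(b,j) · [C(j,u) C(b−j, m−u) / C(b,m)] · (1/n)^j (1 − 1/n)^{b−j} = C(m,u) (1/n)^u (1 − 1/n)^{m−u}, where C(b−j, m−u) = 0 if b − j < m − u. -/
open Finset

lemma choose_swap (B J M : ℕ) (hJ : J ≤ B) (hM : M ≤ B) :
    B.choose J * (B - J).choose M = B.choose M * (B - M).choose J := by
  by_cases h : J + M ≤ B
  · have h1 : M ≤ B - J := by omega
    have key := Nat.choose_mul (n := B) (k := B - J) (s := M) h1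
    rw [Nat.choose_symm hJ] at key
    rw [show B - J - M = (B - M) - J from by omega,
      Nat.choose_symm (show J ≤ B - M from by omega)] at key
    exact key
  · rw [Nat.choose_eq_zero_of_lt (show B - J < M from by omega),
      Nat.choose_eq_zero_of_lt (show B - M < J from by omega)]
    simp

lemma key_nat (b m u j : ℕ) (hu : u ≤ m) (hm : m ≤ b) (huj : u ≤ j) (hjb : j ≤ b) :
    b.choose j * (j.choose u * (b - j).choose (m - u)) =
      b.choose m * m.choose u * (b - m).choose (j - u) := by
  rw [← Nat.mul_assoc, Nat.choose_mul (n := b) huj, Nat.mul_assoc]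
  rw [show b - j = (b - u) - (j - u) from by omega]
  rw [choose_swap (b - u) (j - u) (m - u) (by omega) (by omega)]
  rw [show b - u - (m - u) = b - m from by omega, ← Nat.mul_assoc]
  congr 1
  exact (Nat.choose_mul (n := b) hu).symm

theorem must_wo_binomial_step (n b m u : ℕ) (hn : 1 ≤ n) (hb : 1 ≤ b)
    (hu : 1 ≤ u) (hum : u ≤ m) (hmb : m ≤ b) :
    ∑ j ∈ Finset.Icc u b,
        (b.choose j : ℝ) *
          ((j.choose u : ℝ) * ((b - j).choose (m - u) : ℝ) / (b.choose m : ℝ)) *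
          (1 / n) ^ j * (1 - 1 / n) ^ (b - j)
      = (m.choose u : ℝ) * (1 / n) ^ u * (1 - 1 / (n : ℝ)) ^ (m - u) := by
  set x : ℝ := 1 / n
  set y : ℝ := 1 - 1 / (n : ℝ) with hy
  have hbm : (b.choose m : ℝ) ≠ 0 := Nat.cast_ne_zero.mpr (Nat.choose_pos hmb).ne'
  have step1 : ∀ j ∈ Finset.Icc u b,
      (b.choose j : ℝ) * ((j.choose u : ℝ) * ((b - j).choose (m - u) : ℝ) / (b.choose m : ℝ)) *
        x ^ j * y ^ (b - j)
      = (m.choose u : ℝ) * (((b - m).choose (j - u) : ℝ) * x ^ j * y ^ (b - j)) := by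
    intro j hj
    simp only [Finset.mem_Icc] at hj
    have hkey := key_nat b m u j hum hmb hj.1 hj.2
    have : (b.choose j : ℝ) * ((j.choose u : ℝ) * ((b - j).choose (m - u) : ℝ))
        = (b.choose m : ℝ) * (m.choose u : ℝ) * ((b - m).choose (j - u) : ℝ) := by
      exact_mod_cast congrArg (Nat.cast : ℕ → ℝ) hkey
    field_simp
    linear_combination (x ^ j * y ^ (b - j)) * this
  rw [Finset.sum_congr rfl step1, ← Finset.mul_sum]
  have reindex : ∑ j ∈ Finset.Icc u b, (((b - m).choose (j - u) : ℝ) * x ^ j * y ^ (b - j))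
      = ∑ k ∈ Finset.range (b + 1 - u), (((b - m).choose k : ℝ) * x ^ (u + k) * y ^ (b - (u + k))) := by
    apply Finset.sum_nbij' (fun j => j - u) (fun k => u + k)
    · intro j hj; simp only [Finset.mem_Icc] at hj; simp only [Finset.mem_range]; omega
    · intro k hk; simp only [Finset.mem_range] at hk; simp only [Finset.mem_Icc]; omega
    · intro j hj; simp only [Finset.mem_Icc] at hj; omega
    · intro k hk; omega
    · intro j hj
      simp only [Finset.mem_Icc] at hj
      rw [show u + (j - u) = j from by omega]
  rw [reindex]
  have shrink : ∑ k ∈ Finset.range (b + 1 - u), (((b - m).choose k : ℝ) * x ^ (u + k) * y ^ (b - (u + k)))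
      = ∑ k ∈ Finset.range (b - m + 1), (((b - m).choose k : ℝ) * x ^ (u + k) * y ^ (b - (u + k))) := by
    symm
    apply Finset.sum_subset
    · intro k hk; simp only [Finset.mem_range] at *; omega
    · intro k _ hk
      simp only [Finset.mem_range] at hk
      rw [Nat.choose_eq_zero_of_lt (by omega)]
      simp
  rw [shrink]
  have expand : ∀ k ∈ Finset.range (b - m + 1),
      ((b - m).choose k : ℝ) * x ^ (u + k) * y ^ (b - (u + k))
      = (x ^ u * y ^ (m - u)) * (x ^ k * y ^ (b - m - k) * ((b - m).choose k : ℝ)) := by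
    intro k hk
    simp only [Finset.mem_range] at hk
    rw [pow_add, show b - (u + k) = (m - u) + (b - m - k) from by omega, pow_add]
    ring
  rw [Finset.sum_congr rfl expand, ← Finset.mul_sum, ← add_pow]
  have hxy : x + y = 1 := by rw [hy]; ring
  rw [hxy, one_pow]
  ring
end
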